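/- arXiv:1810.09364 — 2 statements merged into one kernel-verified Lean document; each statement's English description precedes it below -/
import Mathlib

section
/- Let zˢ, zᵗ ∈ ℂ² be nonzero spinors with equal norms ⟨zˢ|zˢ⟩ = ⟨zᵗ|zᵗ⟩. Then the 2×2 matrix h = (|zᵗ]⟨zˢ| − |zᵗ⟩[zˢ|)/√(⟨zˢ|zˢ⟩⟨zᵗ|zᵗ⟩) is in SU(2), i.e. h†h = I and det h = 1, and it satisfies h|zˢ⟩ = |zᵗ]. -/
open Complex Matrix

/-- The dual spinor `|z] = (−z̄₁, z̄₀)`. -/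
noncomputable def ketDual (z : Fin 2 → ℂ) : Fin 2 → ℂ :=
  ![-(starRingEnd ℂ) (z 1), (starRingEnd ℂ) (z 0)]

/-- The dual bra `[z| = (−z₁, z₀)`. -/
def braDual (z : Fin 2 → ℂ) : Fin 2 → ℂ := ![-(z 1), z 0]

/-- The squared norm `⟨z|z⟩` of a spinor. -/
noncomputable def snorm (z : Fin 2 → ℂ) : ℝ := ∑ i, Complex.normSq (z i)

set_option maxHeartbeats 1000000 in
/-- For nonzero spinors of equal norm, the matrix
`h = (|zᵗ]⟨zˢ| − |zᵗ⟩[zˢ|)/√(⟨zˢ|zˢ⟩⟨zᵗ|zᵗ⟩)` is in SU(2) and maps `|zˢ⟩` to `|zᵗ]`. -/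
theorem spinor_holonomy_SU2 (zs zt : Fin 2 → ℂ) (hzs : zs ≠ 0) (hzt : zt ≠ 0)
    (hnorm : snorm zs = snorm zt) :
    let h : Matrix (Fin 2) (Fin 2) ℂ :=
      (Real.sqrt (snorm zs * snorm zt) : ℂ)⁻¹ •
        (Matrix.of (fun i j => ketDual zt i * (starRingEnd ℂ) (zs j)) -
         Matrix.of (fun i j => zt i * braDual zs j))
    hᴴ * h = 1 ∧ h.det = 1 ∧ h.mulVec zs = ketDual zt := by
  intro h
  have hpos : 0 < snorm zs := by
    have : ∃ i, zs i ≠ 0 := by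
      by_contra hc
      push_neg at hc
      exact hzs (funext hc)
    obtain ⟨i, hi⟩ := this
    have : 0 < Complex.normSq (zs i) := Complex.normSq_pos.mpr hi
    calc 0 < Complex.normSq (zs i) := this
      _ ≤ snorm zs := Finset.single_le_sum (f := fun i => Complex.normSq (zs i))
            (fun j _ => Complex.normSq_nonneg _) (Finset.mem_univ i)
  have hsqrt : Real.sqrt (snorm zs * snorm zt) = snorm zs := by
    rw [← hnorm, Real.sqrt_mul_self hpos.le]
  have hn : (snorm zs : ℂ) ≠ 0 := by
    exact_mod_cast (Complex.ofReal_ne_zero.mpr hpos.ne')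
  have hs : (starRingEnd ℂ) (zs 0) * zs 0 + (starRingEnd ℂ) (zs 1) * zs 1 = (snorm zs : ℂ) := by
    simp [snorm, Fin.sum_univ_two, Complex.normSq_eq_conj_mul_self, mul_comm]
  have ht : (starRingEnd ℂ) (zt 0) * zt 0 + (starRingEnd ℂ) (zt 1) * zt 1 = (snorm zs : ℂ) := by
    rw [hnorm]
    simp [snorm, Fin.sum_univ_two, Complex.normSq_eq_conj_mul_self, mul_comm]
  refine ⟨?_, ?_, ?_⟩
  · ext i j
    fin_cases i <;> fin_cases j <;>
      simp [h, hsqrt, Matrix.mul_apply, Fin.sum_univ_two, ketDual, braDual,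
        Matrix.conjTranspose_apply, Matrix.one_apply, _root_.map_mul] <;>
      field_simp
    all_goals
      try ring
    all_goals
      linear_combination ((starRingEnd ℂ) (zt 0) * zt 0 + (starRingEnd ℂ) (zt 1) * zt 1) * hs +
            (snorm zs : ℂ) * ht
  · simp only [h, hsqrt, Matrix.det_fin_two, Matrix.smul_apply, Matrix.sub_apply,
      Matrix.of_apply, ketDual, braDual, Matrix.cons_val_zero, Matrix.cons_val_one,
      Matrix.head_cons, smul_eq_mul]
    field_simp
    linear_combination ((starRingEnd ℂ) (zt 0) * zt 0 + (starRingEnd ℂ) (zt 1) * zt 1) * hs +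
      (snorm zs : ℂ) * ht
  · ext i
    fin_cases i <;>
      simp only [h, hsqrt, Matrix.mulVec, dotProduct, Fin.sum_univ_two,
        Matrix.smul_apply, Matrix.sub_apply, Matrix.of_apply, ketDual, braDual,
        Matrix.cons_val_zero, Matrix.cons_val_one, Matrix.head_cons, smul_eq_mul,
        Fin.isValue, Fin.zero_eta, Fin.mk_one] <;>
      field_simp
    all_goals
      first
        | linear_combination (-(starRingEnd ℂ) (zt 1)) * hs
        | linear_combination ((starRingEnd ℂ) (zt 0)) * hs
end

section
/- Let zˢ, zᵗ ∈ ℂ² be nonzero with ⟨zˢ|zˢ⟩ = ⟨zᵗ|zᵗ⟩, and let h = (|zᵗ]⟨zˢ| − |zᵗ⟩[zˢ|)/⟨zˢ|zˢ⟩ ∈ SU(2). Define Jˢ = ½⟨zˢ|σ|zˢ⟩ and Jᵗ = −½⟨zᵗ|σ|zᵗ⟩. Then h (Jˢ·σ) h⁻¹ = Jᵗ·σ, i.e. h transports the source flux vector to the target flux vector. -/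
open Complex Matrix

/-- The Pauli matrices. -/
noncomputable def pauli : Fin 3 → Matrix (Fin 2) (Fin 2) ℂ :=
  ![!![0, 1; 1, 0], !![0, -I; I, 0], !![1, 0; 0, -1]]

/-- `⟨z|M|z⟩ = Σ_{ij} z̄_i M_{ij} z_j`. -/
noncomputable def expect (M : Matrix (Fin 2) (Fin 2) ℂ) (z : Fin 2 → ℂ) : ℂ :=
  ∑ i, ∑ j, (starRingEnd ℂ) (z i) * M i j * z j

private lemma reC (z : ℂ) : ((z.re : ℝ) : ℂ) = (z + (starRingEnd ℂ) z) / 2 := by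
  rw [Complex.add_conj]; push_cast; ring

private lemma snormC (z : Fin 2 → ℂ) :
    ((snorm z : ℝ) : ℂ) = (starRingEnd ℂ) (z 0) * z 0 + (starRingEnd ℂ) (z 1) * z 1 := by
  simp [snorm, Fin.sum_univ_two, ← Complex.normSq_eq_conj_mul_self]

private lemma snorm_ne (z : Fin 2 → ℂ) (hz : z ≠ 0) : ((snorm z : ℝ) : ℂ) ≠ 0 := by
  have hpos : 0 < snorm z := by
    obtain ⟨i, hi⟩ : ∃ i, z i ≠ 0 := by
      by_contra hc; push_neg at hc; exact hz (funext hc)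
    have h1 : 0 < Complex.normSq (z i) := Complex.normSq_pos.mpr hi
    exact lt_of_lt_of_le h1 (Finset.single_le_sum
      (fun j _ => Complex.normSq_nonneg (z j)) (Finset.mem_univ i))
  exact_mod_cast hpos.ne'

set_option maxHeartbeats 1600000 in
/-- The SU(2) holonomy `h = (|zᵗ]⟨zˢ| − |zᵗ⟩[zˢ|)/⟨zˢ|zˢ⟩` transports the source flux
`Jˢ = ½⟨zˢ|σ|zˢ⟩` to the target flux `Jᵗ = −½⟨zᵗ|σ|zᵗ⟩`:
`h (Jˢ·σ) h⁻¹ = Jᵗ·σ`. -/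
theorem spinor_holonomy_transports_flux (zs zt : Fin 2 → ℂ) (hzs : zs ≠ 0) (hzt : zt ≠ 0)
    (hnorm : snorm zs = snorm zt) :
    let h : Matrix (Fin 2) (Fin 2) ℂ :=
      ((snorm zs : ℂ))⁻¹ •
        (Matrix.of (fun i j => ketDual zt i * (starRingEnd ℂ) (zs j)) -
         Matrix.of (fun i j => zt i * braDual zs j))
    let Js : Fin 3 → ℝ := fun a => ((1 / 2 : ℂ) * expect (pauli a) zs).re
    let Jt : Fin 3 → ℝ := fun a => (-(1 / 2 : ℂ) * expect (pauli a) zt).re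
    h * (∑ a, (Js a : ℂ) • pauli a) * h⁻¹ = ∑ a, (Jt a : ℂ) • pauli a := by
  intro h Js Jt
  have hN : ((snorm zs : ℝ) : ℂ) ≠ 0 := snorm_ne zs hzs
  have hnormC : (starRingEnd ℂ) (zs 0) * zs 0 + (starRingEnd ℂ) (zs 1) * zs 1
      = (starRingEnd ℂ) (zt 0) * zt 0 + (starRingEnd ℂ) (zt 1) * zt 1 := by
    rw [← snormC, ← snormC, hnorm]
  set E : Matrix (Fin 2) (Fin 2) ℂ :=
    (Matrix.of (fun i j => ketDual zt i * (starRingEnd ℂ) (zs j)) -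
     Matrix.of (fun i j => zt i * braDual zs j)) with hEdef
  set F : Matrix (Fin 2) (Fin 2) ℂ :=
    !![(starRingEnd ℂ) (zt 0) * (starRingEnd ℂ) (zs 1) - zt 1 * zs 0,
       (starRingEnd ℂ) (zt 1) * (starRingEnd ℂ) (zs 1) + zt 0 * zs 0;
       -(starRingEnd ℂ) (zt 0) * (starRingEnd ℂ) (zs 0) - zt 1 * zs 1,
       -(starRingEnd ℂ) (zt 1) * (starRingEnd ℂ) (zs 0) + zt 0 * zs 1] with hFdef
  have key1 : E * F = (((snorm zs : ℝ) : ℂ) * ((snorm zs : ℝ) : ℂ)) • 1 := by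
    ext i j
    fin_cases i <;> fin_cases j <;>
        simp [hEdef, hFdef, Matrix.mul_apply, Fin.sum_univ_two, ketDual, braDual, snormC] <;>
      first
        | linear_combination (-((starRingEnd ℂ) (zs 0) * zs 0 + (starRingEnd ℂ) (zs 1) * zs 1)) * hnormC
        | ring
  have hE : h = ((snorm zs : ℝ) : ℂ)⁻¹ • E := rfl
  have hright : h * (((snorm zs : ℝ) : ℂ)⁻¹ • F) = 1 := by
    rw [hE, Matrix.smul_mul, Matrix.mul_smul, key1, smul_smul, smul_smul]
    have hone : ((snorm zs : ℝ) : ℂ)⁻¹ * ((snorm zs : ℝ) : ℂ)⁻¹ *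
      (((snorm zs : ℝ) : ℂ) * ((snorm zs : ℝ) : ℂ)) = 1 := by field_simp
    rw [hone, one_smul]
  have hinv_eq : h⁻¹ = ((snorm zs : ℝ) : ℂ)⁻¹ • F := Matrix.inv_eq_right_inv hright
  have hJs : Js = fun a => ((1 / 2 : ℂ) * expect (pauli a) zs).re := rfl
  have hJt : Jt = fun a => (-(1 / 2 : ℂ) * expect (pauli a) zt).re := rfl
  have Es0 : expect (pauli 0) zs = (starRingEnd ℂ) (zs 0) * zs 1 + (starRingEnd ℂ) (zs 1) * zs 0 := by
    simp [expect, pauli, Fin.sum_univ_two]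
  have Es1 : expect (pauli 1) zs = -I * ((starRingEnd ℂ) (zs 0) * zs 1) + I * ((starRingEnd ℂ) (zs 1) * zs 0) := by
    simp [expect, pauli, Fin.sum_univ_two]; ring
  have Es2 : expect (pauli 2) zs = (starRingEnd ℂ) (zs 0) * zs 0 - (starRingEnd ℂ) (zs 1) * zs 1 := by
    simp [expect, pauli, Fin.sum_univ_two]; ring
  have Et0 : expect (pauli 0) zt = (starRingEnd ℂ) (zt 0) * zt 1 + (starRingEnd ℂ) (zt 1) * zt 0 := by
    simp [expect, pauli, Fin.sum_univ_two]
  have Et1 : expect (pauli 1) zt = -I * ((starRingEnd ℂ) (zt 0) * zt 1) + I * ((starRingEnd ℂ) (zt 1) * zt 0) := by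
    simp [expect, pauli, Fin.sum_univ_two]; ring
  have Et2 : expect (pauli 2) zt = (starRingEnd ℂ) (zt 0) * zt 0 - (starRingEnd ℂ) (zt 1) * zt 1 := by
    simp [expect, pauli, Fin.sum_univ_two]; ring
  have J0C : ((Js 0 : ℝ) : ℂ) = ((starRingEnd ℂ) (zs 0) * zs 1 + (starRingEnd ℂ) (zs 1) * zs 0) / 2 := by
    show (((1/2 : ℂ) * expect (pauli 0) zs).re : ℂ) = _
    rw [reC, Es0]
    simp only [map_add, _root_.map_mul, map_div₀, _root_.map_one, RingHom.id_apply, map_ofNat, RingHomCompTriple.comp_apply,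
      Complex.conj_conj]
    ring
  have J1C : ((Js 1 : ℝ) : ℂ) = (-I * ((starRingEnd ℂ) (zs 0) * zs 1) + I * ((starRingEnd ℂ) (zs 1) * zs 0)) / 2 := by
    show (((1/2 : ℂ) * expect (pauli 1) zs).re : ℂ) = _
    rw [reC, Es1]
    simp only [map_add, _root_.map_mul, map_div₀, _root_.map_one, RingHom.id_apply, map_ofNat, map_neg, Complex.conj_I,
      Complex.conj_conj]
    ring
  have J2C : ((Js 2 : ℝ) : ℂ) = ((starRingEnd ℂ) (zs 0) * zs 0 - (starRingEnd ℂ) (zs 1) * zs 1) / 2 := by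
    show (((1/2 : ℂ) * expect (pauli 2) zs).re : ℂ) = _
    rw [reC, Es2]
    simp only [map_add, _root_.map_mul, map_div₀, _root_.map_one, RingHom.id_apply, map_ofNat, map_sub, Complex.conj_conj]
    ring
  have K0C : ((Jt 0 : ℝ) : ℂ) = -(((starRingEnd ℂ) (zt 0) * zt 1 + (starRingEnd ℂ) (zt 1) * zt 0)) / 2 := by
    show (((-(1/2) : ℂ) * expect (pauli 0) zt).re : ℂ) = _
    rw [reC, Et0]
    simp only [map_add, _root_.map_mul, map_div₀, _root_.map_one, RingHom.id_apply, map_ofNat, map_neg, Complex.conj_conj]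
    ring
  have K1C : ((Jt 1 : ℝ) : ℂ) = -((-I * ((starRingEnd ℂ) (zt 0) * zt 1) + I * ((starRingEnd ℂ) (zt 1) * zt 0))) / 2 := by
    show (((-(1/2) : ℂ) * expect (pauli 1) zt).re : ℂ) = _
    rw [reC, Et1]
    simp only [map_add, _root_.map_mul, map_div₀, _root_.map_one, RingHom.id_apply, map_ofNat, map_neg, Complex.conj_I,
      Complex.conj_conj]
    ring
  have K2C : ((Jt 2 : ℝ) : ℂ) = -(((starRingEnd ℂ) (zt 0) * zt 0 - (starRingEnd ℂ) (zt 1) * zt 1)) / 2 := by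
    show (((-(1/2) : ℂ) * expect (pauli 2) zt).re : ℂ) = _
    rw [reC, Et2]
    simp only [map_add, _root_.map_mul, map_div₀, _root_.map_one, RingHom.id_apply, map_ofNat, map_neg, map_sub,
      Complex.conj_conj]
    ring
  have key2 : E * (∑ a, ((Js a : ℝ) : ℂ) • pauli a)
      = (∑ a, ((Jt a : ℝ) : ℂ) • pauli a) * E := by
    ext i j
    fin_cases i <;> fin_cases j
    · simp [hEdef, Matrix.mul_apply, Matrix.sum_apply, Fin.sum_univ_two,
        Fin.sum_univ_three, pauli, ketDual, braDual, J0C, J1C, J2C, K0C, K1C, K2C]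
      ring_nf
      simp only [Complex.I_sq]
      ring_nf
      linear_combination ((-((starRingEnd ℂ) (zt 1) * (starRingEnd ℂ) (zs 0) + zt 0 * zs 1))/2) * hnormC
    · simp [hEdef, Matrix.mul_apply, Matrix.sum_apply, Fin.sum_univ_two,
        Fin.sum_univ_three, pauli, ketDual, braDual, J0C, J1C, J2C, K0C, K1C, K2C]
      ring_nf
      simp only [Complex.I_sq]
      ring_nf
      linear_combination ((-((starRingEnd ℂ) (zt 1) * (starRingEnd ℂ) (zs 1)) + zt 0 * zs 0)/2) * hnormC
    · simp [hEdef, Matrix.mul_apply, Matrix.sum_apply, Fin.sum_univ_two,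
        Fin.sum_univ_three, pauli, ketDual, braDual, J0C, J1C, J2C, K0C, K1C, K2C]
      ring_nf
      simp only [Complex.I_sq]
      ring_nf
      linear_combination (((starRingEnd ℂ) (zt 0) * (starRingEnd ℂ) (zs 0) - zt 1 * zs 1)/2) * hnormC
    · simp [hEdef, Matrix.mul_apply, Matrix.sum_apply, Fin.sum_univ_two,
        Fin.sum_univ_three, pauli, ketDual, braDual, J0C, J1C, J2C, K0C, K1C, K2C]
      ring_nf
      simp only [Complex.I_sq]
      ring_nf
      linear_combination (((starRingEnd ℂ) (zt 0) * (starRingEnd ℂ) (zs 1) + zt 1 * zs 0)/2) * hnormC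
  have hcomm : h * (∑ a, ((Js a : ℝ) : ℂ) • pauli a)
      = (∑ a, ((Jt a : ℝ) : ℂ) • pauli a) * h := by
    rw [hE, Matrix.smul_mul, key2, ← Matrix.mul_smul]
  have hmulinv : h * h⁻¹ = 1 := by rw [hinv_eq]; exact hright
  calc h * (∑ a, ((Js a : ℝ) : ℂ) • pauli a) * h⁻¹
      = (∑ a, ((Jt a : ℝ) : ℂ) • pauli a) * (h * h⁻¹) := by
        rw [hcomm, Matrix.mul_assoc]
    _ = ∑ a, ((Jt a : ℝ) : ℂ) • pauli a := by rw [hmulinv, Matrix.mul_one]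
end
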